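/- Let M be a closed simply-typed λ-term of type 𝐁 = o → o → o (the Church type of booleans). Then M is βη-equivalent to 𝐭𝐫𝐮𝐞 = λx y. x if and only if the relational point ([∗] → ∅ → ∗) belongs to the relational interpretation ⟦⊢ M : 𝐁⟧ (i.e. ⊳ M : [∗] → ∅ → ∗ : 𝐁), where ∗ is a fixed atom of the base-type web, [∗] denotes the singleton multiset over ∗, and ∅ the empty multiset. -/

import Mathlib

/-! Simple types over a base type `o`, and the relational semantics
(non-idempotent intersection types): `o` is interpreted by a countably
infinite set of atoms (here `ℕ`), and `σ → τ` by finite multisets over the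
web of `σ` paired with the web of `τ`. -/

/-- Simple types over the base type `o`. -/
inductive Ty : Type
  | o : Ty
  | arrow : Ty → Ty → Ty

/-- The relational web of a simple type. -/
def Web : Ty → Type
  | .o => ℕ
  | .arrow σ τ => Multiset (Web σ) × Web τ

/-- Typed de Bruijn variables. -/
inductive Var : List Ty → Ty → Type
  | zero {Γ σ} : Var (σ :: Γ) σ
  | succ {Γ σ τ} : Var Γ σ → Var (τ :: Γ) σ

/-- Intrinsically simply-typed λ-terms. -/
inductive Tm : List Ty → Ty → Type
  | var {Γ σ} : Var Γ σ → Tm Γ σ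
  | lam {Γ σ τ} : Tm (σ :: Γ) τ → Tm Γ (Ty.arrow σ τ)
  | app {Γ σ τ} : Tm Γ (Ty.arrow σ τ) → Tm Γ σ → Tm Γ τ

/-- Renamings between contexts. -/
def Ren (Γ Δ : List Ty) : Type := ∀ σ, Var Γ σ → Var Δ σ

/-- Lifting a renaming under a binder. -/
def Ren.lift {Γ Δ : List Ty} (ρ : Ren Γ Δ) (τ : Ty) : Ren (τ :: Γ) (τ :: Δ) :=
  fun _ v =>
    match v with
    | .zero => .zero
    | .succ w => .succ (ρ _ w)

/-- Applying a renaming to a term. -/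
def rename : {Γ Δ : List Ty} → Ren Γ Δ → {σ : Ty} → Tm Γ σ → Tm Δ σ
  | _, _, ρ, _, .var v => .var (ρ _ v)
  | _, _, ρ, _, .lam M => .lam (rename (Ren.lift ρ _) M)
  | _, _, ρ, _, .app M N => .app (rename ρ M) (rename ρ N)

/-- Substitutions between contexts. -/
def Subst (Γ Δ : List Ty) : Type := ∀ σ, Var Γ σ → Tm Δ σ

/-- Lifting a substitution under a binder. -/
def Subst.lift {Γ Δ : List Ty} (s : Subst Γ Δ) (τ : Ty) : Subst (τ :: Γ) (τ :: Δ) :=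
  fun _ v =>
    match v with
    | .zero => .var .zero
    | .succ w => rename (fun _ u => Var.succ u) (s _ w)

/-- Applying a substitution to a term. -/
def subst : {Γ Δ : List Ty} → Subst Γ Δ → {σ : Ty} → Tm Γ σ → Tm Δ σ
  | _, _, s, _, .var v => s _ v
  | _, _, s, _, .lam M => .lam (subst (Subst.lift s _) M)
  | _, _, s, _, .app M N => .app (subst s M) (subst s N)

/-- The substitution replacing the last variable by `N`. -/
def Subst.cons {Γ : List Ty} {σ : Ty} (N : Tm Γ σ) : Subst (σ :: Γ) Γ :=
  fun _ v =>
    match v with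
    | .zero => N
    | .succ w => .var w

/-- Substitution of the last variable. -/
def subst1 {Γ : List Ty} {σ τ : Ty} (M : Tm (σ :: Γ) τ) (N : Tm Γ σ) : Tm Γ τ :=
  subst (Subst.cons N) M

/-- βη-convertibility of simply-typed λ-terms. -/
inductive BetaEta : {Γ : List Ty} → {σ : Ty} → Tm Γ σ → Tm Γ σ → Prop
  | refl {Γ σ} (M : Tm Γ σ) : BetaEta M M
  | symm {Γ σ} {M N : Tm Γ σ} : BetaEta M N → BetaEta N M
  | trans {Γ σ} {M N P : Tm Γ σ} : BetaEta M N → BetaEta N P → BetaEta M P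
  | app_congr {Γ σ τ} {M M' : Tm Γ (Ty.arrow σ τ)} {N N' : Tm Γ σ} :
      BetaEta M M' → BetaEta N N' → BetaEta (M.app N) (M'.app N')
  | lam_congr {Γ σ τ} {M M' : Tm (σ :: Γ) τ} : BetaEta M M' → BetaEta M.lam M'.lam
  | beta {Γ σ τ} (M : Tm (σ :: Γ) τ) (N : Tm Γ σ) : BetaEta (Tm.app M.lam N) (subst1 M N)
  | eta {Γ σ τ} (M : Tm Γ (Ty.arrow σ τ)) :
      BetaEta M (Tm.lam (Tm.app (rename (fun _ v => Var.succ v) M) (Tm.var Var.zero)))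

/-- Relational environments: a finite multiset over the web of `σ` for each
variable of type `σ` in the context. -/
def REnv (Γ : List Ty) : Type := ∀ σ, Var Γ σ → Multiset (Web σ)

/-- Extending a relational environment. -/
def REnv.cons {Γ : List Ty} {σ : Ty} (X : Multiset (Web σ)) (ρ : REnv Γ) :
    REnv (σ :: Γ) :=
  fun _ v =>
    match v with
    | .zero => X
    | .succ w => ρ _ w

/-- The empty relational environment. -/
def REnv.nil : REnv [] := fun _ v => nomatch v

/-- The relational semantics of a typing sequent: `Sem M ρ α` means that the
tuple `(ρ, α)` belongs to the relational interpretation `⟦x̄:σ̄ ⊢ M : σ⟧`. -/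
def Sem : {Γ : List Ty} → {σ : Ty} → Tm Γ σ → REnv Γ → Web σ → Prop
  | _, _, .var v, ρ, α => α ∈ ρ _ v
  | _, _, .lam M, ρ, α => Sem M (REnv.cons α.1 ρ) α.2
  | _, _, @Tm.app _ σ _ M N, ρ, α =>
      ∃ Y : Multiset (Web σ), Sem M ρ (Y, α) ∧ ∀ β ∈ Y, Sem N ρ β

/-- `RelType M α σ` (written `⊳ M : α : σ` in the paper): the point `α`
belongs to the relational interpretation of the closed term `M : σ`. -/
def RelType {σ : Ty} (M : Tm [] σ) (α : Web σ) : Prop := Sem M REnv.nil α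

/-- The Church type of booleans `𝐁 = o → o → o`. -/
def TyB : Ty := Ty.arrow .o (Ty.arrow .o .o)

/-- The Church boolean `𝐭𝐫𝐮𝐞 = λx y. x`. -/
def churchTrue : Tm [] TyB := .lam (.lam (.var (.succ .zero)))

/-- The Church boolean `𝐟𝐚𝐥𝐬𝐞 = λx y. y`. -/
def churchFalse : Tm [] TyB := .lam (.lam (.var .zero))

/-- The relational point `[∗] → ∅ → ∗` of the type `𝐁`. -/
def boolPoint (ast : Web Ty.o) : Web TyB := ({ast}, (0, ast))


/-! ### Syntactic lemmas about renaming and substitution -/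

theorem rename_ext : ∀ {Γ σ} (M : Tm Γ σ) {Δ} (r r' : Ren Γ Δ),
    (∀ τ v, r τ v = r' τ v) → rename r M = rename r' M := by
  intro Γ σ M
  induction M with
  | var v => intro Δ r r' h; simp only [rename, h]
  | lam M ih =>
    intro Δ r r' h
    simp only [rename]
    rw [ih (Ren.lift r _) (Ren.lift r' _)]
    intro τ v
    cases v with
    | zero => rfl
    | succ w => simp only [Ren.lift, h]
  | app M N ihM ihN =>
    intro Δ r r' h
    simp only [rename]
    rw [ihM _ _ h, ihN _ _ h]

theorem subst_ext : ∀ {Γ σ} (M : Tm Γ σ) {Δ} (s s' : Subst Γ Δ),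
    (∀ τ v, s τ v = s' τ v) → subst s M = subst s' M := by
  intro Γ σ M
  induction M with
  | var v => intro Δ s s' h; simp only [subst, h]
  | lam M ih =>
    intro Δ s s' h
    simp only [subst]
    rw [ih (Subst.lift s _) (Subst.lift s' _)]
    intro τ v
    cases v with
    | zero => rfl
    | succ w => simp only [Subst.lift, h]
  | app M N ihM ihN =>
    intro Δ s s' h
    simp only [subst]
    rw [ihM _ _ h, ihN _ _ h]

theorem rename_rename : ∀ {Γ σ} (M : Tm Γ σ) {Δ Θ} (r : Ren Γ Δ) (r' : Ren Δ Θ),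
    rename r' (rename r M) = rename (fun τ v => r' τ (r τ v)) M := by
  intro Γ σ M
  induction M with
  | var v => intros; simp only [rename]
  | lam M ih =>
    intro Δ Θ r r'
    simp only [rename]
    rw [ih]
    congr 1
    apply rename_ext
    intro τ v
    cases v with
    | zero => rfl
    | succ w => simp only [Ren.lift]
  | app M N ihM ihN =>
    intros; simp only [rename, ihM, ihN]

theorem rename_id : ∀ {Γ σ} (M : Tm Γ σ), rename (fun _ v => v) M = M := by
  intro Γ σ M
  induction M with
  | var v => simp only [rename]
  | lam M ih =>
    simp only [rename]
    rw [rename_ext M (Ren.lift (fun _ v => v) _) (fun _ v => v), ih]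
    intro τ v
    cases v with
    | zero => rfl
    | succ w => simp only [Ren.lift]
  | app M N ihM ihN => simp only [rename, ihM, ihN]

theorem subst_rename : ∀ {Γ σ} (M : Tm Γ σ) {Δ Θ} (r : Ren Γ Δ) (s : Subst Δ Θ),
    subst s (rename r M) = subst (fun τ v => s τ (r τ v)) M := by
  intro Γ σ M
  induction M with
  | var v => intros; simp only [rename, subst]
  | lam M ih =>
    intro Δ Θ r s
    simp only [rename, subst]
    rw [ih]
    congr 1
    apply subst_ext
    intro τ v
    cases v with
    | zero => rfl
    | succ w => simp only [Ren.lift, Subst.lift]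
  | app M N ihM ihN => intros; simp only [rename, subst, ihM, ihN]

theorem rename_subst : ∀ {Γ σ} (M : Tm Γ σ) {Δ Θ} (s : Subst Γ Δ) (r : Ren Δ Θ),
    rename r (subst s M) = subst (fun τ v => rename r (s τ v)) M := by
  intro Γ σ M
  induction M with
  | var v => intros; simp only [rename, subst]
  | lam M ih =>
    intro Δ Θ s r
    simp only [rename, subst]
    rw [ih]
    congr 1
    apply subst_ext
    intro τ v
    cases v with
    | zero => rfl
    | succ w =>
      simp only [Ren.lift, Subst.lift, rename_rename]
      erw [rename_rename, rename_rename]; rfl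
  | app M N ihM ihN => intros; simp only [rename, subst, ihM, ihN]

theorem subst_subst : ∀ {Γ σ} (M : Tm Γ σ) {Δ Θ} (s : Subst Γ Δ) (s' : Subst Δ Θ),
    subst s' (subst s M) = subst (fun τ v => subst s' (s τ v)) M := by
  intro Γ σ M
  induction M with
  | var v => intros; simp only [subst]
  | lam M ih =>
    intro Δ Θ s s'
    simp only [subst]
    rw [ih]
    congr 1
    apply subst_ext
    intro τ v
    cases v with
    | zero => simp only [Subst.lift, subst]
    | succ w =>
      simp only [Subst.lift, subst_rename, rename_subst]
      erw [subst_rename, rename_subst]; rfl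
  | app M N ihM ihN => intros; simp only [subst, ihM, ihN]

theorem subst_var_ren : ∀ {Γ σ} (M : Tm Γ σ) {Δ} (r : Ren Γ Δ),
    subst (fun τ v => .var (r τ v)) M = rename r M := by
  intro Γ σ M
  induction M with
  | var v => intros; simp only [subst, rename]
  | lam M ih =>
    intro Δ r
    simp only [subst, rename]
    rw [← ih (Ren.lift r _)]
    congr 1
    apply subst_ext
    intro τ v
    cases v with
    | zero => rfl
    | succ w => simp only [Subst.lift, Ren.lift, rename]
  | app M N ihM ihN => intros; simp only [subst, rename, ihM, ihN]

theorem subst_var : ∀ {Γ σ} (M : Tm Γ σ), subst (fun _ v => .var v) M = M := by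
  intro Γ σ M
  erw [show (fun (_ : Ty) (v : Var Γ _) => Tm.var v) = (fun τ v => Tm.var ((fun _ u => u) τ v)) from rfl,
    subst_var_ren, rename_id]

theorem rename_subst1 {Γ Δ σ τ} (r : Ren Γ Δ) (M : Tm (σ :: Γ) τ) (N : Tm Γ σ) :
    rename r (subst1 M N) = subst1 (rename (Ren.lift r σ) M) (rename r N) := by
  simp only [subst1, rename_subst, subst_rename]
  apply subst_ext
  intro τ' v
  cases v with
  | zero => simp only [Subst.cons, Ren.lift]
  | succ w => simp only [Subst.cons, Ren.lift, rename]


/-! ### β-reduction and normal forms -/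

/-- One-step β-reduction (full congruence closure). -/
inductive Step : {Γ : List Ty} → {σ : Ty} → Tm Γ σ → Tm Γ σ → Prop
  | beta {Γ σ τ} (M : Tm (σ :: Γ) τ) (N : Tm Γ σ) : Step (Tm.app M.lam N) (subst1 M N)
  | app₁ {Γ σ τ} {M M' : Tm Γ (Ty.arrow σ τ)} {N : Tm Γ σ} :
      Step M M' → Step (M.app N) (M'.app N)
  | app₂ {Γ σ τ} {M : Tm Γ (Ty.arrow σ τ)} {N N' : Tm Γ σ} :
      Step N N' → Step (M.app N) (M.app N')
  | lam {Γ σ τ} {M M' : Tm (σ :: Γ) τ} : Step M M' → Step M.lam M'.lam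

/-- Many-step β-reduction. -/
def Steps {Γ : List Ty} {σ : Ty} (M N : Tm Γ σ) : Prop := Relation.ReflTransGen Step M N

mutual
/-- Neutral β-normal terms. -/
inductive NeT : {Γ : List Ty} → {σ : Ty} → Tm Γ σ → Prop
  | var {Γ σ} (v : Var Γ σ) : NeT (Tm.var v)
  | app {Γ σ τ} {M : Tm Γ (Ty.arrow σ τ)} {N : Tm Γ σ} : NeT M → NfT N → NeT (M.app N)
/-- β-normal terms. -/
inductive NfT : {Γ : List Ty} → {σ : Ty} → Tm Γ σ → Prop
  | lam {Γ σ τ} {M : Tm (σ :: Γ) τ} : NfT M → NfT M.lam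
  | ne {Γ σ} {M : Tm Γ σ} : NeT M → NfT M
end

theorem step_rename : ∀ {Γ σ} {M M' : Tm Γ σ}, Step M M' →
    ∀ {Δ} (r : Ren Γ Δ), Step (rename r M) (rename r M') := by
  intro Γ σ M M' h
  induction h with
  | beta M N =>
    intro Δ r
    simp only [rename, rename_subst1]
    exact Step.beta _ _
  | app₁ h ih => intro Δ r; exact Step.app₁ (ih r)
  | app₂ h ih => intro Δ r; exact Step.app₂ (ih r)
  | lam h ih => intro Δ r; exact Step.lam (ih _)

theorem steps_rename {Γ Δ σ} {M M' : Tm Γ σ} (r : Ren Γ Δ) (h : Steps M M') :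
    Steps (rename r M) (rename r M') :=
  Relation.ReflTransGen.lift (rename r) (fun _ _ h => step_rename h r) _ _ h

theorem steps_app₁ {Γ σ τ} {M M' : Tm Γ (Ty.arrow σ τ)} (N : Tm Γ σ) (h : Steps M M') :
    Steps (M.app N) (M'.app N) :=
  Relation.ReflTransGen.lift (fun M => Tm.app M N) (fun _ _ h => Step.app₁ h) _ _ h

theorem steps_app₂ {Γ σ τ} (M : Tm Γ (Ty.arrow σ τ)) {N N' : Tm Γ σ} (h : Steps N N') :
    Steps (M.app N) (M.app N') :=
  Relation.ReflTransGen.lift (fun N => Tm.app M N) (fun _ _ h => Step.app₂ h) _ _ h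

theorem steps_lam {Γ σ τ} {M M' : Tm (σ :: Γ) τ} (h : Steps M M') :
    Steps M.lam M'.lam :=
  Relation.ReflTransGen.lift Tm.lam (fun _ _ h => Step.lam h) _ _ h

mutual
theorem ne_rename : ∀ {Γ σ} {M : Tm Γ σ}, NeT M → ∀ {Δ} (r : Ren Γ Δ), NeT (rename r M)
  | _, _, _, .var v, _, r => NeT.var _
  | _, _, _, .app hM hN, _, r => NeT.app (ne_rename hM r) (nf_rename hN r)
theorem nf_rename : ∀ {Γ σ} {M : Tm Γ σ}, NfT M → ∀ {Δ} (r : Ren Γ Δ), NfT (rename r M)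
  | _, _, _, .lam hM, _, r => NfT.lam (nf_rename hM _)
  | _, _, _, .ne hM, _, r => NfT.ne (ne_rename hM r)
end

theorem step_betaEta {Γ σ} {M M' : Tm Γ σ} (h : Step M M') : BetaEta M M' := by
  induction h with
  | beta M N => exact BetaEta.beta M N
  | app₁ h ih => exact BetaEta.app_congr ih (BetaEta.refl _)
  | app₂ h ih => exact BetaEta.app_congr (BetaEta.refl _) ih
  | lam h ih => exact BetaEta.lam_congr ih

theorem steps_betaEta {Γ σ} {M M' : Tm Γ σ} (h : Steps M M') : BetaEta M M' := by
  induction h with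
  | refl => exact BetaEta.refl _
  | tail _ h ih => exact BetaEta.trans ih (step_betaEta h)

/-- Weak normalization. -/
def WN {Γ : List Ty} {σ : Ty} (M : Tm Γ σ) : Prop := ∃ N, Steps M N ∧ NfT N


/-! ### Weak normalization via a Kripke logical predicate -/

/-- Extending a substitution. -/
def Subst.cons' {Γ Δ : List Ty} {σ : Ty} (N : Tm Δ σ) (s : Subst Γ Δ) : Subst (σ :: Γ) Δ :=
  fun _ v =>
    match v with
    | .zero => N
    | .succ w => s _ w

/-- The Tait-style reducibility predicate. -/
def Red : (σ : Ty) → {Γ : List Ty} → Tm Γ σ → Prop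
  | .o, _, M => WN M
  | .arrow σ τ, _, M =>
      WN M ∧ ∀ {Δ} (r : Ren _ Δ) (N : Tm Δ σ), Red σ N → Red τ (Tm.app (rename r M) N)

theorem red_wn : ∀ {σ Γ} {M : Tm Γ σ}, Red σ M → WN M := by
  intro σ
  cases σ with
  | o => intro Γ M h; exact h
  | arrow σ τ => intro Γ M h; exact h.1

theorem red_rename : ∀ (σ) {Γ Δ} (r : Ren Γ Δ) (M : Tm Γ σ),
    Red σ M → Red σ (rename r M) := by
  intro σ
  induction σ with
  | o =>
    intro Γ Δ r M h
    obtain ⟨N, hs, hn⟩ := h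
    exact ⟨rename r N, steps_rename r hs, nf_rename hn r⟩
  | arrow σ τ ihσ ihτ =>
    intro Γ Δ r M h
    constructor
    · obtain ⟨N, hs, hn⟩ := h.1
      exact ⟨rename r N, steps_rename r hs, nf_rename hn r⟩
    · intro Θ r' N hN
      rw [rename_rename]
      exact h.2 _ N hN

theorem red_expand : ∀ (σ) {Γ} {M M' : Tm Γ σ}, Step M M' → Red σ M' → Red σ M := by
  intro σ
  induction σ with
  | o =>
    intro Γ M M' hs h
    obtain ⟨N, hs', hn⟩ := h
    exact ⟨N, Relation.ReflTransGen.head hs hs', hn⟩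
  | arrow σ τ ihσ ihτ =>
    intro Γ M M' hs h
    constructor
    · obtain ⟨N, hs', hn⟩ := h.1
      exact ⟨N, Relation.ReflTransGen.head hs hs', hn⟩
    · intro Δ r N hN
      exact ihτ (Step.app₁ (step_rename hs r)) (h.2 r N hN)

theorem red_ne : ∀ (σ) {Γ} (M : Tm Γ σ), (∃ M', Steps M M' ∧ NeT M') → Red σ M := by
  intro σ
  induction σ with
  | o =>
    intro Γ M ⟨M', hs, hne⟩
    exact ⟨M', hs, NfT.ne hne⟩
  | arrow σ τ ihσ ihτ =>
    intro Γ M ⟨M', hs, hne⟩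
    constructor
    · exact ⟨M', hs, NfT.ne hne⟩
    · intro Δ r N hN
      obtain ⟨N', hsN, hnN⟩ := red_wn hN
      apply ihτ
      refine ⟨Tm.app (rename r M') N', ?_, NeT.app (ne_rename hne r) hnN⟩
      exact Relation.ReflTransGen.trans
        (steps_app₁ N (steps_rename r hs))
        (steps_app₂ (rename r M') hsN)

theorem red_var : ∀ {Γ σ} (v : Var Γ σ), Red σ (Tm.var v) :=
  fun v => red_ne _ _ ⟨_, Relation.ReflTransGen.refl, NeT.var v⟩

theorem fundamental : ∀ {Γ σ} (M : Tm Γ σ) {Δ} (s : Subst Γ Δ),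
    (∀ τ v, Red τ (s τ v)) → Red σ (subst s M) := by
  intro Γ σ M
  induction M with
  | var v => intro Δ s hs; exact hs _ v
  | app M N ihM ihN =>
    intro Δ s hs
    have hM := ihM s hs
    have h := hM.2 (fun _ v => v) (subst s N) (ihN s hs)
    rwa [rename_id] at h
  | lam M ih =>
    intro Δ s hs
    have hbody : Red _ (subst (Subst.lift s _) M) := by
      apply ih
      intro τ v
      cases v with
      | zero => exact red_var Var.zero
      | succ w => exact red_rename _ _ _ (hs τ w)
    constructor
    · obtain ⟨N, hsN, hnN⟩ := red_wn hbody
      exact ⟨Tm.lam N, steps_lam hsN, NfT.lam hnN⟩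
    · intro Θ r N hN
      show Red _ (Tm.app (rename r (Tm.lam (subst (Subst.lift s _) M))) N)
      have hred : Red _ (subst (Subst.cons' N (fun τ w => rename r (s τ w))) M) := by
        apply ih
        intro τ v
        cases v with
        | zero => exact hN
        | succ w => exact red_rename _ _ _ (hs τ w)
      apply red_expand _ (Step.beta _ N)
      have heq : subst1 (rename (Ren.lift r _) (subst (Subst.lift s _) M)) N =
          subst (Subst.cons' N (fun τ w => rename r (s τ w))) M := by
        simp only [subst1, subst_rename, subst_subst]
        erw [subst_subst]
        apply subst_ext
        intro τ v
        cases v with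
        | zero => rfl
        | succ w =>
          show subst (fun τ u => Subst.cons N τ (Ren.lift r _ τ u)) (rename (fun _ u => Var.succ u) (s τ w)) = _
          erw [subst_rename]
          show subst (fun τ u => Tm.var (r τ u)) (s τ w) = _
          erw [subst_var_ren]
          rfl
      rw [heq]
      exact hred

/-- Every closed term is weakly β-normalizing. -/
theorem wn_closed {σ : Ty} (M : Tm [] σ) : WN M := by
  have h := fundamental M (fun τ v => Tm.var v) (fun τ v => red_var v)
  rw [subst_var] at h
  exact red_wn h

/-! ### Classification of closed normal forms of type 𝐁 -/

theorem var_mem : ∀ {Γ σ}, Var Γ σ → σ ∈ Γ := by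
  intro Γ σ v
  induction v with
  | zero => exact List.mem_cons_self
  | succ w ih => exact List.mem_cons_of_mem _ ih

theorem ne_empty : ∀ {Γ σ} {M : Tm Γ σ}, NeT M → Γ = [] → False
  | _, _, _, .var v, h => by subst h; exact nomatch v
  | _, _, _, .app hM _, h => ne_empty hM h

theorem ne_base : ∀ {Γ σ} {M : Tm Γ σ}, NeT M → (∀ τ ∈ Γ, τ = Ty.o) → σ = Ty.o
  | _, _, _, .var v, h => h _ (var_mem v)
  | _, _, _, .app hM _, h => Ty.noConfusion (ne_base hM h)

theorem classify_nf (N : Tm [] TyB) (h : NfT N) : N = churchTrue ∨ N = churchFalse := by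
  cases h with
  | ne hne => exact (ne_empty hne rfl).elim
  | lam h1 =>
    rename_i N1
    cases h1 with
    | ne hne =>
      exact Ty.noConfusion (ne_base hne (by intro τ hτ; rw [List.mem_singleton] at hτ; exact hτ))
    | lam h2 =>
      rename_i N2
      cases h2 with
      | ne hne =>
        cases hne with
        | app hP _ =>
          exact Ty.noConfusion (ne_base hP
            (by intro τ hτ; rcases List.mem_cons.mp hτ with h|h
                · exact h
                · rw [List.mem_singleton] at h; exact h))
        | var v =>
          cases v with
          | zero => right; rfl
          | succ w =>
            cases w with
            | zero => left; rfl
            | succ u => exact nomatch u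


/-! ### The relational semantics is invariant under β-reduction -/

/-- Pointwise sum of relational environments. -/
def REnv.add {Γ : List Ty} (ρ ρ' : REnv Γ) : REnv Γ := fun τ v => ρ τ v + ρ' τ v

theorem sem_mono : ∀ {Γ σ} (M : Tm Γ σ) (ρ ρ' : REnv Γ),
    (∀ τ v β, β ∈ ρ τ v → β ∈ ρ' τ v) → ∀ α, Sem M ρ α → Sem M ρ' α := by
  intro Γ σ M
  induction M with
  | var v => intro ρ ρ' h α hα; exact h _ v α hα
  | lam M ih =>
    intro ρ ρ' h α hα
    refine ih (REnv.cons α.1 ρ) (REnv.cons α.1 ρ') ?_ α.2 hα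
    intro τ v β
    cases v with
    | zero => exact id
    | succ w => exact h τ w β
  | app M N ihM ihN =>
    intro ρ ρ' h α hα
    obtain ⟨Y, hM, hN⟩ := hα
    exact ⟨Y, ihM ρ ρ' h _ hM, fun β hβ => ihN ρ ρ' h β (hN β hβ)⟩

theorem sem_rename : ∀ {Γ σ} (M : Tm Γ σ) {Δ} (r : Ren Γ Δ) (ρ : REnv Δ) (α : Web σ),
    Sem (rename r M) ρ α ↔ Sem M (fun τ v => ρ τ (r τ v)) α := by
  intro Γ σ M
  induction M with
  | var v => intro Δ r ρ α; exact Iff.rfl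
  | lam M ih =>
    intro Δ r ρ α
    show Sem (rename (Ren.lift r _) M) (REnv.cons α.1 ρ) α.2 ↔
      Sem M (REnv.cons α.1 fun τ v => ρ τ (r τ v)) α.2
    rw [ih]
    have : (fun τ v => REnv.cons α.1 ρ τ (Ren.lift r _ τ v)) =
        (REnv.cons α.1 fun τ v => ρ τ (r τ v)) := by
      funext τ v
      cases v with
      | zero => rfl
      | succ w => rfl
    rw [this]
  | app M N ihM ihN =>
    intro Δ r ρ α
    show (∃ Y, Sem (rename r M) ρ (Y, α) ∧ ∀ β ∈ Y, Sem (rename r N) ρ β) ↔ _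
    exact exists_congr fun Y =>
      and_congr (ihM r ρ (Y, α)) (forall₂_congr fun β _ => ihN r ρ β)

theorem sem_subst_of : ∀ {Γ σ} (M : Tm Γ σ) {Δ} (s : Subst Γ Δ) (ρ : REnv Δ) (η : REnv Γ)
    (α : Web σ), Sem M η α → (∀ τ v β, β ∈ η τ v → Sem (s τ v) ρ β) → Sem (subst s M) ρ α := by
  intro Γ σ M
  induction M with
  | var v => intro Δ s ρ η α hα h; exact h _ v α hα
  | lam M ih =>
    intro Δ s ρ η α hα h
    show Sem (subst (Subst.lift s _) M) (REnv.cons α.1 ρ) α.2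
    refine ih (Subst.lift s _) (REnv.cons α.1 ρ) (REnv.cons α.1 η) α.2 hα ?_
    intro τ v β hβ
    cases v with
    | zero => exact hβ
    | succ w =>
      show Sem (rename (fun _ u => Var.succ u) (s τ w)) (REnv.cons α.1 ρ) β
      erw [sem_rename]
      exact h τ w β hβ
  | app M N ihM ihN =>
    intro Δ s ρ η α hα h
    obtain ⟨Y, hM, hN⟩ := hα
    exact ⟨Y, ihM s ρ η (Y, α) hM h, fun β hβ => ihN s ρ η β (hN β hβ) h⟩


/-- The relational environment which is `X` at `v` and empty elsewhere. -/
def REnv.single : {Γ : List Ty} → {σ : Ty} → Var Γ σ → Multiset (Web σ) → REnv Γ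
  | _, _, .zero, X => REnv.cons X (fun _ _ => 0)
  | _, _, .succ v, X => REnv.cons 0 (REnv.single v X)

theorem single_self : ∀ {Γ σ} (v : Var Γ σ) (α : Web σ), α ∈ REnv.single v {α} _ v := by
  intro Γ σ v α
  induction v with
  | zero => exact Multiset.mem_singleton_self α
  | succ w ih => exact ih α

theorem single_spec : ∀ {Γ σ} (v : Var Γ σ) (X : Multiset (Web σ))
    {P : ∀ τ, Var Γ τ → Web τ → Prop}, (∀ β ∈ X, P σ v β) →
    ∀ τ w β, β ∈ REnv.single v X τ w → P τ w β := by
  intro Γ σ v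
  induction v with
  | zero =>
    intro X P h τ w β hβ
    cases w with
    | zero => exact h β hβ
    | succ u => simp [REnv.single, REnv.cons] at hβ
  | succ u ih =>
    intro X P h τ w β hβ
    cases w with
    | zero => simp [REnv.single, REnv.cons] at hβ
    | succ w' => exact ih X (P := fun τ w => P τ (Var.succ w)) h τ w' β hβ

theorem sem_subst_to : ∀ {Γ σ} (M : Tm Γ σ) {Δ} (s : Subst Γ Δ) (ρ : REnv Δ) (α : Web σ),
    Sem (subst s M) ρ α →
    ∃ η : REnv Γ, Sem M η α ∧ ∀ τ v β, β ∈ η τ v → Sem (s τ v) ρ β := by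
  intro Γ σ M
  induction M with
  | var v =>
    intro Δ s ρ α hα
    refine ⟨REnv.single v {α}, ?_, ?_⟩
    · exact single_self v α
    · exact single_spec v {α} (fun β hβ => by
        rw [Multiset.mem_singleton] at hβ; subst hβ; exact hα)
  | lam M ih =>
    intro Δ s ρ α hα
    obtain ⟨η', h1, h2⟩ := ih (Subst.lift s _) (REnv.cons α.1 ρ) α.2 hα
    refine ⟨fun τ v => η' τ (Var.succ v), ?_, ?_⟩
    · show Sem M (REnv.cons α.1 fun τ v => η' τ (Var.succ v)) α.2
      refine sem_mono M η' _ ?_ α.2 h1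
      intro τ v β hβ
      cases v with
      | zero => exact h2 _ Var.zero β hβ
      | succ w => exact hβ
    · intro τ v β hβ
      have := h2 τ (Var.succ v) β hβ
      show Sem (s τ v) ρ β
      have h3 : Sem (rename (fun _ u => Var.succ u) (s τ v)) (REnv.cons α.1 ρ) β := this
      erw [sem_rename] at h3
      exact h3
  | app M N ihM ihN =>
    intro Δ s ρ α hα
    obtain ⟨Y, hM, hN⟩ := hα
    obtain ⟨η₁, h1, h1c⟩ := ihM s ρ (Y, α) hM
    have aux : ∀ (Z : Multiset (Web _)), (∀ β ∈ Z, Sem (subst s N) ρ β) →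
        ∃ η₂ : REnv _, (∀ τ v β, β ∈ η₂ τ v → Sem (s τ v) ρ β) ∧ ∀ β ∈ Z, Sem N η₂ β := by
      intro Z
      induction Z using Multiset.induction with
      | empty =>
        intro _
        exact ⟨fun _ _ => 0, by intro τ v β hβ; simp at hβ, by intro β hβ; simp at hβ⟩
      | cons b Z ihZ =>
        intro h
        obtain ⟨η₂, hc2, h2⟩ := ihZ fun β hβ => h β (Multiset.mem_cons_of_mem hβ)
        obtain ⟨ηb, hb, hbc⟩ := ihN s ρ b (h b (Multiset.mem_cons_self b Z))
        refine ⟨REnv.add ηb η₂, ?_, ?_⟩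
        · intro τ v β hβ
          rcases Multiset.mem_add.mp hβ with h'|h'
          · exact hbc τ v β h'
          · exact hc2 τ v β h'
        · intro β hβ
          rcases Multiset.mem_cons.mp hβ with h'|h'
          · subst h'
            exact sem_mono N ηb _ (fun τ v γ hγ => Multiset.mem_add.mpr (Or.inl hγ)) β hb
          · exact sem_mono N η₂ _ (fun τ v γ hγ => Multiset.mem_add.mpr (Or.inr hγ)) β (h2 β h')
    obtain ⟨η₂, hc2, h2⟩ := aux Y hN
    refine ⟨REnv.add η₁ η₂, ⟨Y, ?_, ?_⟩, ?_⟩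
    · exact sem_mono M η₁ _ (fun τ v γ hγ => Multiset.mem_add.mpr (Or.inl hγ)) _ h1
    · exact fun β hβ =>
        sem_mono N η₂ _ (fun τ v γ hγ => Multiset.mem_add.mpr (Or.inr hγ)) β (h2 β hβ)
    · intro τ v β hβ
      rcases Multiset.mem_add.mp hβ with h'|h'
      · exact h1c τ v β h'
      · exact hc2 τ v β h'

theorem sem_beta {Γ σ τ} (M : Tm (σ :: Γ) τ) (N : Tm Γ σ) (ρ : REnv Γ) (α : Web τ) :
    Sem (Tm.app M.lam N) ρ α ↔ Sem (subst1 M N) ρ α := by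
  constructor
  · rintro ⟨Y, hM, hN⟩
    refine sem_subst_of M (Subst.cons N) ρ (REnv.cons Y ρ) α hM ?_
    intro τ' v β hβ
    cases v with
    | zero => exact hN β hβ
    | succ w => exact hβ
  · intro h
    obtain ⟨η, h1, h2⟩ := sem_subst_to M (Subst.cons N) ρ α h
    refine ⟨η _ Var.zero, ?_, ?_⟩
    · show Sem M (REnv.cons (η _ Var.zero) ρ) α
      refine sem_mono M η _ ?_ α h1
      intro τ' v β hβ
      cases v with
      | zero => exact hβ
      | succ w => exact h2 _ (Var.succ w) β hβ
    · exact fun β hβ => h2 _ Var.zero β hβ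

theorem sem_step : ∀ {Γ σ} {M M' : Tm Γ σ}, Step M M' →
    ∀ (ρ : REnv Γ) (α : Web σ), (Sem M ρ α ↔ Sem M' ρ α) := by
  intro Γ σ M M' h
  induction h with
  | beta M N => intro ρ α; exact sem_beta M N ρ α
  | app₁ h ih =>
    intro ρ α
    exact exists_congr fun Y => and_congr (ih ρ (Y, α)) Iff.rfl
  | app₂ h ih =>
    intro ρ α
    exact exists_congr fun Y => and_congr Iff.rfl (forall₂_congr fun β _ => ih ρ β)
  | lam h ih => intro ρ α; exact ih (REnv.cons α.1 ρ) α.2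

theorem sem_steps {Γ σ} {M M' : Tm Γ σ} (h : Steps M M') (ρ : REnv Γ) (α : Web σ) :
    Sem M ρ α ↔ Sem M' ρ α := by
  induction h with
  | refl => exact Iff.rfl
  | tail _ h ih => exact ih.trans (sem_step h _ _)


/-! ### A set-theoretic model, sound for βη-conversion -/

/-- The full set-theoretic interpretation of types. -/
def SetI : Ty → Type
  | .o => ℕ
  | .arrow σ τ => SetI σ → SetI τ

/-- Set-theoretic environments. -/
def SEnv (Γ : List Ty) : Type := ∀ σ, Var Γ σ → SetI σ

/-- Extending a set-theoretic environment. -/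
def SEnv.cons {Γ : List Ty} {σ : Ty} (x : SetI σ) (ρ : SEnv Γ) : SEnv (σ :: Γ) :=
  fun _ v =>
    match v with
    | .zero => x
    | .succ w => ρ _ w

/-- Evaluation of terms in the set-theoretic model. -/
def evalT : {Γ : List Ty} → {σ : Ty} → Tm Γ σ → SEnv Γ → SetI σ
  | _, _, .var v, ρ => ρ _ v
  | _, _, .lam M, ρ => fun x => evalT M (SEnv.cons x ρ)
  | _, _, .app M N, ρ => evalT M ρ (evalT N ρ)

theorem evalT_rename : ∀ {Γ σ} (M : Tm Γ σ) {Δ} (r : Ren Γ Δ) (ρ : SEnv Δ),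
    evalT (rename r M) ρ = evalT M (fun τ v => ρ τ (r τ v)) := by
  intro Γ σ M
  induction M with
  | var v => intros; rfl
  | lam M ih =>
    intro Δ r ρ
    show (fun x => evalT (rename (Ren.lift r _) M) (SEnv.cons x ρ)) = _
    funext x
    rw [ih]
    congr 1
    funext τ v
    cases v with
    | zero => rfl
    | succ w => rfl
  | app M N ihM ihN => intro Δ r ρ; show _ = evalT M _ (evalT N _); rw [← ihM, ← ihN]; rfl

theorem evalT_subst : ∀ {Γ σ} (M : Tm Γ σ) {Δ} (s : Subst Γ Δ) (ρ : SEnv Δ),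
    evalT (subst s M) ρ = evalT M (fun τ v => evalT (s τ v) ρ) := by
  intro Γ σ M
  induction M with
  | var v => intros; rfl
  | lam M ih =>
    intro Δ s ρ
    show (fun x => evalT (subst (Subst.lift s _) M) (SEnv.cons x ρ)) = _
    funext x
    rw [ih]
    congr 1
    funext τ v
    cases v with
    | zero => rfl
    | succ w =>
      show evalT (rename (fun _ u => Var.succ u) (s τ w)) (SEnv.cons x ρ) = _
      erw [evalT_rename]
      rfl
  | app M N ihM ihN => intro Δ s ρ; show _ = evalT M _ (evalT N _); rw [← ihM, ← ihN]; rfl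

theorem evalT_sound {Γ σ} {M N : Tm Γ σ} (h : BetaEta M N) :
    ∀ ρ : SEnv Γ, evalT M ρ = evalT N ρ := by
  induction h with
  | refl M => intro ρ; rfl
  | symm _ ih => intro ρ; exact (ih ρ).symm
  | trans _ _ ih₁ ih₂ => intro ρ; exact (ih₁ ρ).trans (ih₂ ρ)
  | app_congr _ _ ihM ihN => intro ρ; simp only [evalT]; rw [ihM ρ, ihN ρ]
  | lam_congr _ ih =>
    intro ρ
    show (fun x => evalT _ (SEnv.cons x ρ)) = fun x => evalT _ (SEnv.cons x ρ)
    funext x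
    exact ih _
  | beta M N =>
    intro ρ
    show evalT M.lam ρ (evalT N ρ) = evalT (subst1 M N) ρ
    rw [show evalT M.lam ρ (evalT N ρ) = evalT M (SEnv.cons (evalT N ρ) ρ) from rfl,
      subst1, evalT_subst]
    congr 1
    funext τ v
    cases v with
    | zero => rfl
    | succ w => rfl
  | eta M =>
    intro ρ
    show evalT M ρ = fun x => evalT (rename (fun _ v => Var.succ v) M) (SEnv.cons x ρ) (SEnv.cons x ρ _ Var.zero)
    funext x
    erw [evalT_rename]
    rfl

theorem not_true_false : ¬ BetaEta churchTrue churchFalse := by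
  intro h
  have h2 : (fun (x _ : ℕ) => x) = (fun (_ y : ℕ) => y) :=
    evalT_sound h (fun _ v => nomatch v)
  have h3 := congrFun (congrFun h2 0) 1
  simp at h3

/-- Let `M` be a closed simply-typed λ-term of type
`𝐁 = o → o → o`. Then `M =βη 𝐭𝐫𝐮𝐞` if and only if the relational point
`[∗] → ∅ → ∗` belongs to the relational interpretation of `M`,
where `∗` is a fixed atom of the base-type web. -/
theorem boolean_semantic_evaluation (ast : Web Ty.o) (M : Tm [] TyB) :
    BetaEta M churchTrue ↔ RelType M (boolPoint ast) := by
  obtain ⟨N, hsteps, hnf⟩ := wn_closed M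
  have hMN : BetaEta M N := steps_betaEta hsteps
  have hsem : RelType M (boolPoint ast) ↔ RelType N (boolPoint ast) :=
    sem_steps hsteps REnv.nil (boolPoint ast)
  have htrue : RelType churchTrue (boolPoint ast) := by
    show ast ∈ ({ast} : Multiset ℕ)
    exact Multiset.mem_singleton_self ast
  have hfalse : ¬ RelType churchFalse (boolPoint ast) := by
    show ¬ ast ∈ (0 : Multiset ℕ)
    exact Multiset.notMem_zero ast
  rcases classify_nf N hnf with h|h
  · subst h
    constructor
    · intro _; exact hsem.mpr htrue
    · intro _; exact hMN
  · subst h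
    constructor
    · intro hM
      exact absurd (BetaEta.trans (BetaEta.symm hM) hMN) not_true_false
    · intro hM
      exact absurd (hsem.mp hM) hfalse
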